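/- There exist subsets A, B of the group SL₂(8) with |A| = 21 and |B| = 24 such that every element of SL₂(8) has a unique representation as a product a·b with a ∈ A, b ∈ B. -/

import Mathlib

set_option maxRecDepth 100000

def F8 : Type := Fin 8
instance : DecidableEq F8 := inferInstanceAs (DecidableEq (Fin 8))
instance : Fintype F8 := inferInstanceAs (Fintype (Fin 8))
def mulNat (a b : Nat) : Nat :=
  let r := (if b &&& 1 = 1 then a else 0) ^^^
           (if b &&& 2 = 2 then a <<< 1 else 0) ^^^
           (if b &&& 4 = 4 then a <<< 2 else 0)
  let r := if r &&& 32 = 32 then r ^^^ 44 else r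
  let r := if r &&& 16 = 16 then r ^^^ 22 else r
  if r &&& 8 = 8 then r ^^^ 11 else r
def F8.add (a b : F8) : F8 := ⟨(a.val ^^^ b.val) % 8, Nat.mod_lt _ (by norm_num)⟩
def F8.mul (a b : F8) : F8 := ⟨mulNat a.val b.val % 8, Nat.mod_lt _ (by norm_num)⟩
example : ∀ a b : F8, F8.add a b = F8.add b a := by decide
example : ∀ a b c : F8, F8.mul (F8.mul a b) c = F8.mul a (F8.mul b c) := by decide
def F8.inv (a : F8) : F8 := let a2 := a.mul a; let a4 := a2.mul a2; a4.mul a2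
instance : Add F8 := ⟨F8.add⟩
instance : Mul F8 := ⟨F8.mul⟩
instance : Zero F8 := ⟨(⟨0, by norm_num⟩ : Fin 8)⟩
instance : One F8 := ⟨(⟨1, by norm_num⟩ : Fin 8)⟩
instance : Neg F8 := ⟨id⟩
instance : Inv F8 := ⟨F8.inv⟩
instance : CommRing F8 where
  add_assoc := by decide
  zero_add := by decide
  add_zero := by decide
  nsmul := nsmulRec
  add_comm := by decide
  left_distrib := by decide
  right_distrib := by decide
  zero_mul := by decide
  mul_zero := by decide
  mul_assoc := by decide
  one_mul := by decide
  mul_one := by decide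
  npow := npowRec
  zsmul := zsmulRec
  neg_add_cancel := by decide
  mul_comm := by decide
instance : Field F8 where
  exists_pair_ne := ⟨0, 1, by decide⟩
  mul_inv_cancel := by decide
  inv_zero := by decide
  nnqsmul := _
  qsmul := _

instance (n : Nat) : OfNat F8 n := ⟨(⟨n % 8, Nat.mod_lt _ (by norm_num)⟩ : Fin 8)⟩

def ZMod2toF8 : ZMod 2 →+* F8 where
  toFun := fun x => if x = 0 then 0 else 1
  map_one' := by decide
  map_mul' := by decide
  map_zero' := by decide
  map_add' := by decide

instance : Algebra (ZMod 2) F8 := ZMod2toF8.toAlgebra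

noncomputable def f8Equiv : F8 ≃+* GaloisField 2 3 :=
  (GaloisField.algEquivGaloisFieldOfFintype 2 3 (by decide : Fintype.card F8 = 2 ^ 3)).toRingEquiv

abbrev SL2 := Matrix.SpecialLinearGroup (Fin 2) F8
abbrev SLG := Matrix.SpecialLinearGroup (Fin 2) (GaloisField 2 3)

noncomputable def slEquiv : SL2 ≃* SLG :=
  MulEquiv.mk'
    { toFun := Matrix.SpecialLinearGroup.map (f8Equiv : F8 →+* GaloisField 2 3)
      invFun := Matrix.SpecialLinearGroup.map (f8Equiv.symm : GaloisField 2 3 →+* F8)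
      left_inv := fun g => Subtype.ext (by
        ext i j
        exact f8Equiv.symm_apply_apply (g.val i j))
      right_inv := fun g => Subtype.ext (by
        ext i j
        exact f8Equiv.apply_symm_apply (g.val i j)) }
    (map_mul (Matrix.SpecialLinearGroup.map (f8Equiv : F8 →+* GaloisField 2 3)))

def mk (a b c d : F8) (h : (Matrix.of ![![a, b], ![c, d]]).det = 1 := by decide) : SL2 := ⟨_, h⟩

def listA : List SL2 := [mk 0 1 1 5, mk 0 2 5 7, mk 0 3 6 3, mk 0 4 7 6, mk 0 5 2 1, mk 0 6 3 4, mk 0 7 4 2, mk 1 0 4 1, mk 1 5 2 0, mk 2 0 2 5, mk 2 1 1 0, mk 3 0 5 6, mk 3 4 7 0, mk 4 0 1 7, mk 4 2 5 0, mk 5 0 3 2, mk 5 7 4 0, mk 6 0 7 3, mk 6 3 6 0, mk 7 0 6 4, mk 7 6 3 0]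
def listB : List SL2 := [mk 2 0 7 5, mk 2 1 7 3, mk 2 2 7 2, mk 2 3 7 4, mk 2 4 7 0, mk 2 5 7 6, mk 2 6 7 7, mk 2 7 7 1, mk 4 0 3 7, mk 4 1 3 5, mk 4 2 3 3, mk 4 3 3 1, mk 4 4 3 4, mk 4 5 3 6, mk 4 6 3 0, mk 4 7 3 2, mk 7 0 7 4, mk 7 1 7 5, mk 7 2 7 6, mk 7 3 7 7, mk 7 4 7 0, mk 7 5 7 1, mk 7 6 7 2, mk 7 7 7 3]

def key (g : SL2) : Nat :=
  (((g.val 0 0).val * 8 + (g.val 0 1).val) * 8 + (g.val 1 0).val) * 8 + (g.val 1 1).val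

def prodList : List SL2 := (listA ×ˢ listB).map fun p => p.1 * p.2

set_option maxHeartbeats 4000000 in
theorem nodup_key : (prodList.map key).Nodup := by decide

theorem nodup_prodList : prodList.Nodup := nodup_key.of_map key

set_option maxHeartbeats 1000000 in
theorem card_SL2 : Fintype.card SL2 = 504 := by decide

theorem nodupA : listA.Nodup := (nodup_key_A).of_map key where
  nodup_key_A : (listA.map key).Nodup := by decide

theorem nodupB : listB.Nodup := (nodup_key_B).of_map key where
  nodup_key_B : (listB.map key).Nodup := by decide

def FinA : Finset SL2 := ⟨↑listA, nodupA⟩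
def FinB : Finset SL2 := ⟨↑listB, nodupB⟩

theorem length_prodList : prodList.length = 504 := by decide

def IsFactorization {G : Type*} [Group G] (A B : Finset G) : Prop :=
  ∀ g : G, ∃! p : G × G, p.1 ∈ A ∧ p.2 ∈ B ∧ p.1 * p.2 = g

theorem mem_prodList (g : SL2) : g ∈ prodList := by
  have h : (⟨↑prodList, nodup_prodList⟩ : Finset SL2) = Finset.univ := by
    apply Finset.eq_univ_of_card
    rw [card_SL2]
    exact length_prodList
  have := Finset.mem_univ g
  rw [← h] at this
  exact Multiset.mem_coe.1 (Finset.mem_def.1 this)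

theorem factorization_F8 : IsFactorization FinA FinB := by
  intro g
  obtain ⟨p, hp, hpe⟩ := List.mem_map.1 (mem_prodList g)
  have hmem := List.pair_mem_product.1 (show (p.1, p.2) ∈ listA ×ˢ listB from hp)
  refine ⟨p, ⟨?_, ?_, hpe⟩, ?_⟩
  · exact Multiset.mem_coe.2 hmem.1
  · exact Multiset.mem_coe.2 hmem.2
  · rintro ⟨q1, q2⟩ ⟨hq1, hq2, hqe⟩
    have hqmem : (q1, q2) ∈ listA ×ˢ listB :=
      List.pair_mem_product.2 ⟨Multiset.mem_coe.1 hq1, Multiset.mem_coe.1 hq2⟩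
    exact List.inj_on_of_nodup_map nodup_prodList hqmem hp (by simp [hqe, hpe])

theorem isFactorization_map {G H : Type*} [Group G] [Group H] (e : G ≃* H)
    {A B : Finset G} (h : IsFactorization A B) :
    IsFactorization (A.map e.toEquiv.toEmbedding) (B.map e.toEquiv.toEmbedding) := by
  intro g
  obtain ⟨p, ⟨ha, hb, hm⟩, huniq⟩ := h (e.symm g)
  refine ⟨(e p.1, e p.2), ⟨?_, ?_, ?_⟩, ?_⟩
  · exact Finset.mem_map_of_mem _ ha
  · exact Finset.mem_map_of_mem _ hb
  · rw [← map_mul, hm]; simp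
  · rintro ⟨q1, q2⟩ ⟨hq1, hq2, hqe⟩
    obtain ⟨x, hx, hxe⟩ := Finset.mem_map.1 hq1
    obtain ⟨y, hy, hye⟩ := Finset.mem_map.1 hq2
    simp only [Equiv.coe_toEmbedding, MulEquiv.coe_toEquiv] at hxe hye
    subst hxe hye
    have : (x, y) = p := by
      apply huniq
      refine ⟨hx, hy, ?_⟩
      have : e (x * y) = g := by rw [map_mul]; exact hqe
      rw [← this]; simp
    rw [Prod.ext_iff] at this ⊢
    exact ⟨congrArg e this.1, congrArg e this.2⟩

theorem sl_2_8_factorization_21_24 :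
    ∃ A B : Finset (Matrix.SpecialLinearGroup (Fin 2) (GaloisField 2 3)),
      A.card = 21 ∧ B.card = 24 ∧ IsFactorization A B := by
  refine ⟨FinA.map slEquiv.toEquiv.toEmbedding, FinB.map slEquiv.toEquiv.toEmbedding, ?_, ?_, ?_⟩
  · rw [Finset.card_map]; decide
  · rw [Finset.card_map]; decide
  · exact isFactorization_map slEquiv factorization_F8
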